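/- Let Q ∈ ℝ^{p×p} be symmetric positive definite and q ∈ ℝ^p, 𝐰 ∈ ℝ^p, μ ≥ 0. Let ŵ be the unique minimizer of J(w) = ½(w−𝐰)ᵀQ(w−𝐰) − qᵀ(w−𝐰) + μ‖w‖₁. Then ‖ŵ − 𝐰‖₂ ≤ (p^{1/2}·μ + ‖q‖₂)/λ_min(Q). -/

import Mathlib

open Matrix

/-- Smallest eigenvalue of a symmetric matrix, as the infimum of the Rayleigh quotient
over the unit sphere. -/
noncomputable def lambdaMin {ι : Type*} [Fintype ι] (A : Matrix ι ι ℝ) : ℝ :=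
  sInf {r | ∃ v : ι → ℝ, (∑ i, v i ^ 2) = 1 ∧ r = v ⬝ᵥ A.mulVec v}

/-- Largest eigenvalue of a symmetric matrix, as the supremum of the Rayleigh quotient
over the unit sphere. -/
noncomputable def lambdaMax {ι : Type*} [Fintype ι] (A : Matrix ι ι ℝ) : ℝ :=
  sSup {r | ∃ v : ι → ℝ, (∑ i, v i ^ 2) = 1 ∧ r = v ⬝ᵥ A.mulVec v}

/-- The `ℓ²` operator norm (largest singular value) of a matrix. -/
noncomputable def opNorm {ι : Type*} [Fintype ι] (A : Matrix ι ι ℝ) : ℝ :=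
  sSup {r | ∃ v : ι → ℝ, (∑ i, v i ^ 2) = 1 ∧ r = Real.sqrt (∑ i, (A.mulVec v i) ^ 2)}

/-- The euclidean (`ℓ²`) norm of a vector. -/
noncomputable def norm2 {ι : Type*} [Fintype ι] (v : ι → ℝ) : ℝ :=
  Real.sqrt (∑ i, v i ^ 2)

/-- The `ℓ¹` norm of a vector. -/
noncomputable def norm1 {ι : Type*} [Fintype ι] (v : ι → ℝ) : ℝ :=
  ∑ i, |v i|

theorem lambdaMin_facts {p : ℕ} (hp : 0 < p) (Q : Matrix (Fin p) (Fin p) ℝ) (hQ : Q.PosDef) :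
    0 < lambdaMin Q ∧
    ∀ v : Fin p → ℝ, lambdaMin Q * (∑ i, v i ^ 2) ≤ v ⬝ᵥ Q.mulVec v := by
  rw [lambdaMin]
  set S := {r | ∃ v : Fin p → ℝ, (∑ i, v i ^ 2) = 1 ∧ r = v ⬝ᵥ Q.mulVec v} with hS
  set K := {v : Fin p → ℝ | (∑ i, v i ^ 2) = 1} with hK
  have hcont : Continuous (fun v : Fin p → ℝ => v ⬝ᵥ Q.mulVec v) := by
    simp only [dotProduct, Matrix.mulVec]; fun_prop
  have hKc : IsCompact K := by
    have hc : IsClosed K := isClosed_eq (by fun_prop) continuous_const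
    have hb : Bornology.IsBounded K := by
      apply Bornology.IsBounded.subset (Metric.isBounded_closedBall (x := (0 : Fin p → ℝ)) (r := 1))
      intro v hv
      simp only [Metric.mem_closedBall, dist_zero_right]
      rw [pi_norm_le_iff_of_nonneg (by norm_num)]
      intro i
      rw [Real.norm_eq_abs, abs_le]
      constructor <;> nlinarith [hv.symm ▸ (Finset.single_le_sum (f := fun i => v i ^2)
        (fun i _ => sq_nonneg (v i)) (Finset.mem_univ i) : v i ^2 ≤ ∑ j, v j ^2), sq_nonneg (v i)]
    exact Metric.isCompact_of_isClosed_isBounded hc hb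
  have hKne : K.Nonempty := by
    refine ⟨Pi.single ⟨0, hp⟩ 1, ?_⟩
    show (∑ i, (Pi.single ⟨0, hp⟩ 1 : Fin p → ℝ) i ^ 2) = 1
    simp [Pi.single_apply]
  obtain ⟨v₀, hv₀K, hv₀min⟩ := hKc.exists_isMinOn hKne hcont.continuousOn
  have hSne : S.Nonempty := ⟨v₀ ⬝ᵥ Q.mulVec v₀, v₀, hv₀K, rfl⟩
  have hlb : ∀ r ∈ S, v₀ ⬝ᵥ Q.mulVec v₀ ≤ r := by
    rintro r ⟨v, hv, rfl⟩
    exact hv₀min hv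
  have hbdd : BddBelow S := ⟨_, hlb⟩
  have hv₀pos : 0 < v₀ ⬝ᵥ Q.mulVec v₀ := by
    have hv₀ne : v₀ ≠ 0 := by
      intro h
      rw [hK] at hv₀K
      simp only [Set.mem_setOf_eq, h] at hv₀K
      simp at hv₀K
    have := hQ.dotProduct_mulVec_pos hv₀ne
    simpa using this
  have hpos : 0 < sInf S := lt_of_lt_of_le hv₀pos (le_csInf hSne hlb)
  refine ⟨hpos, fun v => ?_⟩
  by_cases hs : (∑ i, v i ^ 2) = 0
  · have hv0 : v = 0 := by
      funext i
      show v i = 0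
      have h1 : v i ^ 2 ≤ 0 := hs ▸ Finset.single_le_sum (f := fun i => v i ^2)
        (fun i _ => sq_nonneg (v i)) (Finset.mem_univ i)
      nlinarith [sq_nonneg (v i)]
    simp [hv0, hs]
  · have hsum_pos : 0 < ∑ i, v i ^ 2 :=
      lt_of_le_of_ne (Finset.sum_nonneg fun i _ => sq_nonneg (v i)) (Ne.symm hs)
    set s := ∑ i, v i ^ 2
    set c : ℝ := 1 / Real.sqrt s with hc
    have hcs : c ^ 2 * s = 1 := by
      rw [hc, div_pow, one_pow, Real.sq_sqrt hsum_pos.le]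
      field_simp
    have hmem : (c • v) ⬝ᵥ Q.mulVec (c • v) ∈ S := by
      refine ⟨c • v, ?_, rfl⟩
      simp only [Pi.smul_apply, smul_eq_mul, mul_pow]
      rw [← Finset.mul_sum]
      exact hcs
    have h1 : sInf S ≤ (c • v) ⬝ᵥ Q.mulVec (c • v) := csInf_le hbdd hmem
    have h2 : (c • v) ⬝ᵥ Q.mulVec (c • v) = c ^ 2 * (v ⬝ᵥ Q.mulVec v) := by
      rw [Matrix.mulVec_smul, smul_dotProduct, dotProduct_smul]
      simp [sq]; ring
    rw [h2] at h1
    have hc2 : c ^ 2 = 1 / s := by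
      field_simp at hcs ⊢; linarith
    rw [hc2] at h1
    rw [mul_comm]
    calc s * sInf S ≤ s * (1 / s * (v ⬝ᵥ Q.mulVec v)) :=
          mul_le_mul_of_nonneg_left h1 hsum_pos.le
      _ = v ⬝ᵥ Q.mulVec v := by field_simp

theorem cs_dot {p : ℕ} (f g : Fin p → ℝ) :
    (∑ i, f i * g i) ≤ Real.sqrt (∑ i, f i ^ 2) * Real.sqrt (∑ i, g i ^ 2) := by
  have h := Finset.sum_mul_sq_le_sq_mul_sq Finset.univ f g
  have h2 : (∑ i, f i * g i) ≤ Real.sqrt ((∑ i, f i ^ 2) * (∑ i, g i ^ 2)) := by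
    rcases le_or_gt (∑ i, f i * g i) 0 with h0 | h0
    · exact h0.trans (Real.sqrt_nonneg _)
    · rw [← Real.sqrt_sq h0.le]
      exact Real.sqrt_le_sqrt h
  rwa [Real.sqrt_mul (Finset.sum_nonneg fun i _ => sq_nonneg (f i))] at h2

/-- Error bound for the Lasso-type minimizer:
`‖ŵ − 𝐰‖₂ ≤ (√p·μ + ‖q‖₂)/λ_min(Q)`. -/
theorem stmt_6 {p : ℕ} (Q : Matrix (Fin p) (Fin p) ℝ) (hQ : Q.PosDef)
    (q w wh : Fin p → ℝ) (μ : ℝ) (hμ : 0 ≤ μ)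
    (hmin : ∀ v : Fin p → ℝ,
      (1 / 2) * ((wh - w) ⬝ᵥ Q.mulVec (wh - w)) - q ⬝ᵥ (wh - w) + μ * norm1 wh ≤
      (1 / 2) * ((v - w) ⬝ᵥ Q.mulVec (v - w)) - q ⬝ᵥ (v - w) + μ * norm1 v) :
    norm2 (wh - w) ≤ (Real.sqrt p * μ + norm2 q) / lambdaMin Q := by
  rcases Nat.eq_zero_or_pos p with hp | hp
  · subst hp
    simp [norm2, Finset.univ_eq_empty]
  obtain ⟨hLpos, hray⟩ := lambdaMin_facts hp Q hQ
  set d : Fin p → ℝ := wh - w with hd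
  set A : ℝ := d ⬝ᵥ Q.mulVec d with hA
  set s : ℝ := ∑ i, d i ^ 2 with hs
  set n : ℝ := Real.sqrt s with hn
  have hs0 : 0 ≤ s := Finset.sum_nonneg fun i _ => sq_nonneg (d i)
  have hn0 : 0 ≤ n := Real.sqrt_nonneg _
  have hn2 : n ^ 2 = s := Real.sq_sqrt hs0
  have hA0 : 0 ≤ A := by
    have := hQ.posSemidef.dotProduct_mulVec_nonneg d
    simpa using this
  set C : ℝ := q ⬝ᵥ d + μ * (norm1 w - norm1 wh) with hC
  -- step 1: A ≤ C + (t/2) * A for all t ∈ (0,1]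
  have step1 : ∀ t : ℝ, 0 < t → t ≤ 1 → A ≤ C + (t / 2) * A := by
    intro t ht ht1
    have hkey := hmin (w + (1 - t) • d)
    have hvw : (w + (1 - t) • d) - w = (1 - t) • d := add_sub_cancel_left w _
    rw [hvw] at hkey
    have e1 : ((1 - t) • d) ⬝ᵥ Q.mulVec ((1 - t) • d) = (1 - t) ^ 2 * A := by
      rw [Matrix.mulVec_smul, smul_dotProduct, dotProduct_smul]
      simp only [smul_eq_mul]; ring
    have e2 : q ⬝ᵥ ((1 - t) • d) = (1 - t) * (q ⬝ᵥ d) := by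
      rw [dotProduct_smul]; simp
    have e3 : norm1 (w + (1 - t) • d) ≤ (1 - t) * norm1 wh + t * norm1 w := by
      rw [norm1, norm1, norm1, Finset.mul_sum, Finset.mul_sum, ← Finset.sum_add_distrib]
      apply Finset.sum_le_sum
      intro i _
      have hwh : (w + (1 - t) • d) i = (1 - t) * wh i + t * w i := by
        simp only [Pi.add_apply, Pi.smul_apply, smul_eq_mul, hd, Pi.sub_apply]
        ring
      rw [hwh]
      calc |(1 - t) * wh i + t * w i| ≤ |(1 - t) * wh i| + |t * w i| := abs_add_le _ _
        _ = (1 - t) * |wh i| + t * |w i| := by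
            rw [abs_mul, abs_mul, abs_of_nonneg (by linarith), abs_of_nonneg ht.le]
    rw [e1, e2] at hkey
    have hkey2 : (1 / 2 : ℝ) * A - q ⬝ᵥ d + μ * norm1 wh ≤
        1 / 2 * ((1 - t) ^ 2 * A) - (1 - t) * (q ⬝ᵥ d) + μ * ((1 - t) * norm1 wh + t * norm1 w) :=
      hkey.trans (by nlinarith [e3])
    nlinarith [mul_pos ht ht]
  -- step 2: A ≤ C
  have step2 : A ≤ C := by
    apply le_of_forall_pos_le_add
    intro ε hε
    have hA1 : 0 < A + 1 := by linarith
    set t : ℝ := min 1 (ε / (A + 1)) with htdef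
    have ht : 0 < t := lt_min one_pos (div_pos hε hA1)
    have ht1 : t ≤ 1 := min_le_left _ _
    have ht2 : t ≤ ε / (A + 1) := min_le_right _ _
    have h1 := step1 t ht ht1
    have h2 : (t / 2) * A ≤ ε := by
      have : t * A ≤ (ε / (A + 1)) * A := mul_le_mul_of_nonneg_right ht2 hA0
      have h3 : (ε / (A + 1)) * A ≤ ε := by
        rw [div_mul_eq_mul_div, div_le_iff₀ hA1]
        nlinarith
      nlinarith
    linarith
  -- step 3: C ≤ (√p μ + ‖q‖₂) * n
  have hB : q ⬝ᵥ d ≤ norm2 q * n := by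
    rw [dotProduct, norm2, hn, hs]
    exact cs_dot q d
  have hnorm1 : norm1 w - norm1 wh ≤ norm1 d := by
    rw [norm1, norm1, norm1, ← Finset.sum_sub_distrib]
    apply Finset.sum_le_sum
    intro i _
    calc |w i| - |wh i| ≤ |w i - wh i| := abs_sub_abs_le_abs_sub _ _
      _ = |d i| := by rw [hd]; simp [abs_sub_comm]
  have hnorm1d : norm1 d ≤ Real.sqrt p * n := by
    have h := sq_sum_le_card_mul_sum_sq (s := Finset.univ) (f := fun i => |d i|)
    simp only [Finset.card_univ, Fintype.card_fin, sq_abs] at h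
    have h1 : norm1 d ≤ Real.sqrt ((p : ℝ) * s) := by
      rw [norm1]
      rw [← Real.sqrt_sq (Finset.sum_nonneg fun i _ => abs_nonneg (d i) : (0:ℝ) ≤ norm1 d)]
      apply Real.sqrt_le_sqrt
      exact_mod_cast h
    rwa [Real.sqrt_mul (Nat.cast_nonneg p)] at h1
  have hC2 : C ≤ (Real.sqrt p * μ + norm2 q) * n := by
    have : μ * (norm1 w - norm1 wh) ≤ μ * (Real.sqrt p * n) :=
      mul_le_mul_of_nonneg_left (hnorm1.trans hnorm1d) hμ
    rw [hC]
    nlinarith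
  -- combine
  have hrayd : lambdaMin Q * s ≤ A := hray d
  have hfinal : lambdaMin Q * n ^ 2 ≤ (Real.sqrt p * μ + norm2 q) * n := by
    rw [hn2]; linarith
  have hnum : 0 ≤ Real.sqrt p * μ + norm2 q := by
    have := Real.sqrt_nonneg (p : ℝ)
    have := Real.sqrt_nonneg (∑ i, q i ^ 2)
    rw [norm2]
    nlinarith
  show n ≤ (Real.sqrt p * μ + norm2 q) / lambdaMin Q
  rw [le_div_iff₀ hLpos]
  rcases hn0.eq_or_lt' with h0 | h0
  · rw [h0]; simpa using hnum
  · nlinarith [hfinal, h0, hLpos]
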